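/- If l, l', l'' are three concurrent lines in ℝ³ whose unit direction vectors span a parallelepiped of volume at least θ, and among the three pairwise angles the largest is α (attained, say, by l and l'), then θ^{1/2} ≲ α ≲ 1 and the angle β between l'' and the plane spanned by l and l' satisfies θ/α ≲ β ≲ α (up to absolute constants). -/

import Mathlib

open Matrix

lemma cross_cross' (a b c : Fin 3 → ℝ) :
    a ⨯₃ (b ⨯₃ c) = (a ⬝ᵥ c) • b - (a ⬝ᵥ b) • c := by
  funext i
  fin_cases i <;>
    simp [cross_apply, vec3_dotProduct, dotProduct, Fin.sum_univ_three] <;> ring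

lemma dot_self_nonneg' (x : Fin 3 → ℝ) : 0 ≤ x ⬝ᵥ x :=
  Finset.sum_nonneg fun i _ => mul_self_nonneg (x i)

lemma cs3 (x y : Fin 3 → ℝ) : (x ⬝ᵥ y)^2 ≤ (x ⬝ᵥ x) * (y ⬝ᵥ y) := by
  have h := dot_self_nonneg' (x ⨯₃ y)
  rw [cross_dot_cross, dotProduct_comm y x] at h
  nlinarith [h]

lemma bessel3 (u n w : Fin 3 → ℝ) (hu : u ⬝ᵥ u = 1) (hn : n ⬝ᵥ n = 1)
    (hnu : n ⬝ᵥ u = 0) (hw : w ⬝ᵥ w = 1) :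
    (u ⬝ᵥ w)^2 + (w ⬝ᵥ n)^2 ≤ 1 := by
  have hun : u ⬝ᵥ n = 0 := by rw [dotProduct_comm]; exact hnu
  have h := dot_self_nonneg' (w - (u ⬝ᵥ w) • u - (w ⬝ᵥ n) • n)
  simp only [sub_dotProduct, dotProduct_sub, smul_dotProduct,
    dotProduct_smul, smul_eq_mul, dotProduct_comm w u,
    dotProduct_comm n w] at h
  rw [hu, hn, hun, hnu, hw] at h
  nlinarith [h]

theorem stmt16 : ∃ c C : ℝ, 0 < c ∧ 0 < C ∧
    ∀ (u u' u'' n : Fin 3 → ℝ) (θ : ℝ),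
      u ⬝ᵥ u = 1 → u' ⬝ᵥ u' = 1 → u'' ⬝ᵥ u'' = 1 →
      n ⬝ᵥ n = 1 → n ⬝ᵥ u = 0 → n ⬝ᵥ u' = 0 →
      0 < θ → θ ≤ |(Matrix.of ![u, u', u'']).det| →
      Real.arccos |u ⬝ᵥ u''| ≤ Real.arccos |u ⬝ᵥ u'| →
      Real.arccos |u' ⬝ᵥ u''| ≤ Real.arccos |u ⬝ᵥ u'| →
      (c * Real.sqrt θ ≤ Real.arccos |u ⬝ᵥ u'| ∧
       Real.arccos |u ⬝ᵥ u'| ≤ C ∧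
       c * (θ / Real.arccos |u ⬝ᵥ u'|) ≤ Real.arcsin |u'' ⬝ᵥ n| ∧
       Real.arcsin |u'' ⬝ᵥ n| ≤ C * Real.arccos |u ⬝ᵥ u'|) := by
  refine ⟨1, 4, one_pos, by norm_num, ?_⟩
  intro u u' u'' n θ hu hu' hu'' hn hnu hnu' hθ hθD h1 h2
  set a : ℝ := u ⬝ᵥ u' with ha
  set b : ℝ := u ⬝ᵥ u'' with hb
  set e : ℝ := u'' ⬝ᵥ n with he
  set D : ℝ := (Matrix.of ![u, u', u'']).det with hDdef
  set v : Fin 3 → ℝ := u ⨯₃ u' with hv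
  -- D is the triple product
  have hD : D = u'' ⬝ᵥ v := by
    rw [hDdef, hv]
    rw [show (Matrix.of ![u, u', u'']).det = Matrix.det ![u, u', u''] from rfl,
      ← triple_product_eq_det, triple_product_permutation u u' u'',
      triple_product_permutation u' u'' u]
  -- v is parallel to n
  have h0 : n ⨯₃ v = 0 := by
    rw [hv, cross_cross', hnu, hnu']; simp
  have hvn : v = (n ⬝ᵥ v) • n := by
    have h3 := cross_cross' n n v
    rw [h0, hn] at h3
    simp only [map_zero, one_smul] at h3
    exact (sub_eq_zero.mp h3.symm).symm
  -- squared identity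
  have hvv : v ⬝ᵥ v = 1 - a^2 := by
    rw [hv, cross_dot_cross, hu, hu', dotProduct_comm u' u, ← ha]; ring
  have hnv2 : (n ⬝ᵥ v)^2 = 1 - a^2 := by
    have : v ⬝ᵥ v = (n ⬝ᵥ v) * (n ⬝ᵥ v) := by
      conv_lhs => rw [hvn]
      rw [smul_dotProduct, dotProduct_smul, hn, smul_eq_mul, smul_eq_mul]
      ring
    nlinarith [this, hvv]
  have hDe : D = (n ⬝ᵥ v) * e := by
    rw [hD]
    conv_lhs => rw [hvn]
    rw [dotProduct_smul, ← he, smul_eq_mul]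
  have hD2 : D^2 = (1 - a^2) * e^2 := by rw [hDe]; rw [← hnv2]; ring
  -- basic bounds
  have ha2 : a^2 ≤ 1 := by have := cs3 u u'; rw [hu, hu'] at this; linarith
  have he2 : e^2 ≤ 1 := by have := cs3 u'' n; rw [hu'', hn] at this; linarith
  have hbe : b^2 + e^2 ≤ 1 := bessel3 u n u'' hu hn hnu hu''
  have habs : |D| = Real.sqrt (1 - a^2) * |e| := by
    rw [← Real.sqrt_sq_eq_abs, hD2, Real.sqrt_mul (by linarith), Real.sqrt_sq_eq_abs]
  set α : ℝ := Real.arccos |a| with hα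
  set β : ℝ := Real.arcsin |e| with hβ
  have hα0 : 0 ≤ α := Real.arccos_nonneg _
  have hβ0 : 0 ≤ β := Real.arcsin_nonneg.mpr (abs_nonneg _)
  have hsinα : Real.sin α = Real.sqrt (1 - a^2) := by
    rw [hα, Real.sin_arccos, sq_abs]
  have he1 : |e| ≤ 1 := by
    rw [← Real.sqrt_one, ← Real.sqrt_sq_eq_abs]
    exact Real.sqrt_le_sqrt (by linarith)
  have hsinβ : Real.sin β = |e| := Real.sin_arcsin (by linarith [abs_nonneg e]) he1
  -- θ ≤ sin α * sin β
  have hkey : θ ≤ Real.sin α * Real.sin β := by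
    rw [hsinα, hsinβ, ← habs]; exact hθD
  have hsinα_le : Real.sin α ≤ α := Real.sin_le hα0
  have hsinβ_le : Real.sin β ≤ β := Real.sin_le hβ0
  have hsinα0 : 0 ≤ Real.sin α := by rw [hsinα]; positivity
  have hsinβ0 : 0 ≤ Real.sin β := by rw [hsinβ]; exact abs_nonneg _
  have hθαβ : θ ≤ α * β :=
    le_trans hkey (mul_le_mul hsinα_le hsinβ_le hsinβ0 hα0)
  have hαβpos : 0 < α * β := lt_of_lt_of_le hθ hθαβ
  have hαpos : 0 < α := by
    rcases hα0.lt_or_eq with h | h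
    · exact h
    · exfalso; rw [← h, zero_mul] at hαβpos; exact lt_irrefl 0 hαβpos
  -- β ≤ arccos |b|
  have hγ2 : Real.arccos |b| ≤ Real.pi / 2 := Real.arccos_le_pi_div_two.mpr (abs_nonneg _)
  have hγ0 : 0 ≤ Real.arccos |b| := Real.arccos_nonneg _
  have hsinγ : Real.sin (Real.arccos |b|) = Real.sqrt (1 - b^2) := by
    rw [Real.sin_arccos, sq_abs]
  have hβγ : β ≤ Real.arccos |b| := by
    have h4 : |e| ≤ Real.sin (Real.arccos |b|) := by
      rw [hsinγ, ← Real.sqrt_sq_eq_abs]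
      exact Real.sqrt_le_sqrt (by nlinarith)
    calc β ≤ Real.arcsin (Real.sin (Real.arccos |b|)) :=
          Real.monotone_arcsin h4
      _ = Real.arccos |b| := Real.arcsin_sin (by linarith [Real.pi_pos]) (by linarith [Real.pi_pos])
  have hβα : β ≤ α := le_trans hβγ h1
  refine ⟨?_, ?_, ?_, ?_⟩
  · rw [one_mul]
    have : θ ≤ α^2 := by
      calc θ ≤ α * β := hθαβ
        _ ≤ α * α := mul_le_mul_of_nonneg_left hβα hα0
        _ = α^2 := (sq α).symm
    calc Real.sqrt θ ≤ Real.sqrt (α^2) := Real.sqrt_le_sqrt this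
      _ = α := by rw [Real.sqrt_sq hα0]
  · linarith [Real.arccos_le_pi |a|, Real.pi_le_four]
  · rw [one_mul, div_le_iff₀ hαpos]
    linarith [hθαβ, mul_comm α β]
  · linarith
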